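/- Let H, K, H_in be Hilbert spaces and Θ : B(H ⊗ K) → B(H_in) a positive linear map such that the marginal map A ↦ Θ(A ⊗ 1_K) is normal (i.e., preserves suprema of bounded increasing nets of self-adjoint operators, equivalently: for every decreasing net A_α of positive operators with infimum 0, Θ(A_α ⊗ 1_K) decreases to 0). Then for every fixed positive B ∈ B(K), the map A ↦ Θ(A ⊗ B) is normal: for every decreasing net A_α of positive operators in B(H) with infimum 0, the net Θ(A_α ⊗ B) decreases to 0. -/

import Mathlib

open ContinuousLinearMap Set

set_option maxHeartbeats 1000000
set_option synthInstance.maxHeartbeats 400000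

/-- In a C⋆-algebra, a nonnegative real scalar multiple of a nonnegative element is
nonnegative, via conjugation by `√c • 1`. -/
private lemma aux_smul_nonneg {V : Type*} [NormedRing V] [StarRing V] [CStarRing V]
    [CompleteSpace V] [NormedAlgebra ℂ V] [StarModule ℂ V] [PartialOrder V]
    [StarOrderedRing V] {c : ℝ} (hc : 0 ≤ c) {X : V} (hX : 0 ≤ X) : 0 ≤ c • X := by
  have h : c • X = star ((Real.sqrt c : ℂ) • (1 : V)) * X * ((Real.sqrt c : ℂ) • 1) := by
    rw [star_smul, star_one, Complex.star_def, Complex.conj_ofReal]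
    rw [smul_mul_assoc, one_mul, mul_smul_comm, mul_one, smul_smul,
      ← Complex.ofReal_mul, Real.mul_self_sqrt hc]
    rw [← algebraMap_smul ℂ c X, Complex.coe_algebraMap]
  rw [h]
  exact star_left_conjugate_nonneg hX _

/-- Binormality from normality of the marginal (Lemma 5 of the paper specialized to
`B(H ⊗ K)`, presented through commuting unital embeddings `πH, πK` of the factors so that
`A ⊗ B = πH A * πK B`): if `A ↦ Θ(A ⊗ 1)` is normal — every decreasing net of positive
operators with infimum `0` is sent to a net with infimum `0` — then for every fixed positive
`B ∈ B(K)`, the map `A ↦ Θ(A ⊗ B)` is normal in the same sense. -/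
theorem binormal_of_marginal_normal {H K E Hin : Type*}
    [NormedAddCommGroup H] [InnerProductSpace ℂ H] [CompleteSpace H]
    [NormedAddCommGroup K] [InnerProductSpace ℂ K] [CompleteSpace K]
    [NormedAddCommGroup E] [InnerProductSpace ℂ E] [CompleteSpace E]
    [NormedAddCommGroup Hin] [InnerProductSpace ℂ Hin] [CompleteSpace Hin]
    (πH : (H →L[ℂ] H) →⋆ₐ[ℂ] (E →L[ℂ] E)) (πK : (K →L[ℂ] K) →⋆ₐ[ℂ] (E →L[ℂ] E))
    (hcomm : ∀ (A : H →L[ℂ] H) (B : K →L[ℂ] K), πH A * πK B = πK B * πH A)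
    (Θ : (E →L[ℂ] E) →ₗ[ℂ] (Hin →L[ℂ] Hin))
    (hΘpos : ∀ X : E →L[ℂ] E, 0 ≤ X → 0 ≤ Θ X)
    (hmarg : ∀ (ι : Type) [Preorder ι] [IsDirected ι (· ≥ ·)] (A : ι → (H →L[ℂ] H)),
      Antitone A → (∀ i, 0 ≤ A i) → IsGLB (range A) 0 →
        IsGLB (range fun i => Θ (πH (A i) * πK 1)) 0) :
    ∀ (B : K →L[ℂ] K), 0 ≤ B →
      ∀ (ι : Type) [Preorder ι] [IsDirected ι (· ≥ ·)] (A : ι → (H →L[ℂ] H)),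
        Antitone A → (∀ i, 0 ≤ A i) → IsGLB (range A) 0 →
          IsGLB (range fun i => Θ (πH (A i) * πK B)) 0 := by
  intro B hB ι _ _ A hanti hpos hglb
  have hΘmono : ∀ {X Y : E →L[ℂ] E}, X ≤ Y → Θ X ≤ Θ Y := by
    intro X Y hXY
    have := hΘpos (Y - X) (sub_nonneg.mpr hXY)
    rw [map_sub] at this
    exact sub_nonneg.mp this
  have hΘsmul : ∀ (r : ℝ) (X : E →L[ℂ] E), Θ (r • X) = r • Θ X := by
    intro r X
    rw [← algebraMap_smul ℂ r X, map_smul, algebraMap_smul]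
  set c : ℝ := ‖B‖ with hc
  have hcnn : 0 ≤ c := norm_nonneg B
  -- πK B ≥ 0
  have hπKB : (0 : E →L[ℂ] E) ≤ πK B := by
    have hSB : CFC.sqrt B * CFC.sqrt B = B := CFC.sqrt_mul_sqrt_self B hB
    have hSBsa : IsSelfAdjoint (CFC.sqrt B) := .of_nonneg (CFC.sqrt_nonneg _)
    calc (0 : E →L[ℂ] E) ≤ star (πK (CFC.sqrt B)) * πK (CFC.sqrt B) := star_mul_self_nonneg _
    _ = πK B := by rw [← map_star, hSBsa.star_eq, ← map_mul, hSB]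
  -- πK B ≤ c • 1
  have hπKBle : πK B ≤ c • (1 : E →L[ℂ] E) := by
    have h1 : B ≤ algebraMap ℝ (K →L[ℂ] K) c :=
      IsSelfAdjoint.le_algebraMap_norm_self (.of_nonneg hB)
    have h2 : (0 : E →L[ℂ] E) ≤ πK (algebraMap ℝ (K →L[ℂ] K) c - B) := by
      have hd : algebraMap ℝ (K →L[ℂ] K) c - B = CFC.sqrt _ * CFC.sqrt _ :=
        (CFC.sqrt_mul_sqrt_self _ (sub_nonneg.mpr h1)).symm
      have hsa : IsSelfAdjoint (CFC.sqrt (algebraMap ℝ (K →L[ℂ] K) c - B)) :=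
        .of_nonneg (CFC.sqrt_nonneg _)
      calc (0 : E →L[ℂ] E) ≤ star (πK (CFC.sqrt _)) * πK (CFC.sqrt _) := star_mul_self_nonneg _
      _ = πK (algebraMap ℝ (K →L[ℂ] K) c - B) := by
          rw [← map_star, hsa.star_eq, ← map_mul, ← hd]
    rw [map_sub] at h2
    have h3 : πK (algebraMap ℝ (K →L[ℂ] K) c) = c • (1 : E →L[ℂ] E) := by
      rw [Algebra.algebraMap_eq_smul_one, ← algebraMap_smul ℂ c (1 : K →L[ℂ] K),
        map_smul, map_one, algebraMap_smul]
    rw [h3] at h2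
    exact sub_nonneg.mp h2
  -- key inequalities
  have hkey : ∀ i, 0 ≤ πH (A i) * πK B ∧ πH (A i) * πK B ≤ c • (πH (A i) * πK 1) := by
    intro i
    set S := CFC.sqrt (A i) with hS
    have hSmul : S * S = A i := CFC.sqrt_mul_sqrt_self (A i) (hpos i)
    have hSsa : IsSelfAdjoint S := .of_nonneg (CFC.sqrt_nonneg _)
    have hπSsa : IsSelfAdjoint (πH S) := by
      rw [IsSelfAdjoint, ← map_star, hSsa.star_eq]
    have hdecomp : πH (A i) * πK B = star (πH S) * πK B * πH S := by
      rw [hπSsa.star_eq, ← hSmul, map_mul]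
      calc πH S * πH S * πK B = πH S * (πH S * πK B) := mul_assoc _ _ _
      _ = πH S * (πK B * πH S) := by rw [hcomm]
      _ = πH S * πK B * πH S := (mul_assoc _ _ _).symm
    constructor
    · rw [hdecomp]
      exact star_left_conjugate_nonneg hπKB _
    · rw [hdecomp]
      calc star (πH S) * πK B * πH S ≤ star (πH S) * (c • 1) * πH S :=
            star_left_conjugate_le_conjugate hπKBle _
      _ = c • (πH (A i) * πK 1) := by
          rw [map_one, mul_one, hπSsa.star_eq, mul_smul_comm, mul_one, smul_mul_assoc,
            ← map_mul, hSmul]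
  -- conclusion
  have hmarg' := hmarg ι A hanti hpos hglb
  constructor
  · rintro _ ⟨i, rfl⟩
    exact hΘpos _ (hkey i).1
  · intro W hW
    rcases isEmpty_or_nonempty ι with hι | hι
    · exact hmarg'.2 (by rintro _ ⟨i, rfl⟩; exact absurd (Nonempty.intro i) (not_nonempty_iff.mpr hι))
    · rcases eq_or_lt_of_le hcnn with hc0 | hc0
      · -- c = 0, so B = 0 and each term is 0
        obtain ⟨i⟩ := hι
        have : Θ (πH (A i) * πK B) ≤ 0 := by
          calc Θ (πH (A i) * πK B) ≤ Θ (c • (πH (A i) * πK 1)) := hΘmono (hkey i).2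
          _ = 0 := by rw [← hc0, zero_smul, map_zero]
        exact le_trans (hW ⟨i, rfl⟩) this
      · -- c > 0
        have hW' : c⁻¹ • W ≤ 0 := by
          apply hmarg'.2
          rintro _ ⟨i, rfl⟩
          have h1 : W ≤ c • Θ (πH (A i) * πK 1) := by
            calc W ≤ Θ (πH (A i) * πK B) := hW ⟨i, rfl⟩
            _ ≤ Θ (c • (πH (A i) * πK 1)) := hΘmono (hkey i).2
            _ = c • Θ (πH (A i) * πK 1) := hΘsmul _ _
          have h2 : 0 ≤ c • Θ (πH (A i) * πK 1) - W := sub_nonneg.mpr h1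
          have h3 : 0 ≤ c⁻¹ • (c • Θ (πH (A i) * πK 1) - W) :=
            aux_smul_nonneg (inv_nonneg.mpr hcnn) h2
          rw [smul_sub, smul_smul, inv_mul_cancel₀ (ne_of_gt hc0), one_smul] at h3
          exact sub_nonneg.mp h3
        have h4 : 0 ≤ c • (0 - c⁻¹ • W) := aux_smul_nonneg hcnn (sub_nonneg.mpr hW')
        rw [smul_sub, smul_zero, smul_smul, mul_inv_cancel₀ (ne_of_gt hc0), one_smul] at h4
        exact sub_nonneg.mp h4
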